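/- For any f ∈ I(n+1, m+1) (a nondecreasing map ℤ → ℤ with f(x + n+1) = f(x) + m+1) and any interval I = [y, y+m] ⊂ ℤ, the preimage f⁻¹(I) is a nonempty interval of the form [x, x+n] for some x ∈ ℤ. -/

import Mathlib

/-- For `f ∈ I(n+1, m+1)` and any interval `[y, y+m] ⊂ ℤ`, the preimage `f⁻¹([y, y+m])`
is a (nonempty) interval of the form `[x, x+n]`. -/
theorem stmt2 (n m : ℤ) (hn : 0 ≤ n) (hm : 0 ≤ m) (f : ℤ → ℤ)
    (hmono : Monotone f) (hper : ∀ x, f (x + (n + 1)) = f x + (m + 1)) (y : ℤ) :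
    ∃ x : ℤ, f ⁻¹' (Set.Icc y (y + m)) = Set.Icc x (x + n) := by
  -- values at multiples of (n+1)
  have hk : ∀ k : ℤ, f (k * (n + 1)) = f 0 + k * (m + 1) := by
    intro k
    induction k using Int.induction_on with
    | zero => simp
    | succ k ih =>
      have : ((k : ℤ) + 1) * (n + 1) = k * (n + 1) + (n + 1) := by ring
      rw [this, hper, ih]; ring
    | pred k ih =>
      have h := hper ((-(k : ℤ) - 1) * (n + 1))
      have e : (-(k : ℤ) - 1) * (n + 1) + (n + 1) = (-(k : ℤ)) * (n + 1) := by ring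
      rw [e, ih] at h
      have e2 : (-(k:ℤ) - 1) * (m + 1) = (-(k:ℤ)) * (m + 1) - (m + 1) := by ring
      linarith
  -- the set {x | y ≤ f x} is nonempty and bounded below
  have hne : ∃ x : ℤ, y ≤ f x := by
    refine ⟨(|y - f 0| + 1) * (n + 1), ?_⟩
    rw [hk]
    have h1 : (1 : ℤ) ≤ m + 1 := by omega
    have h2 : (0 : ℤ) ≤ |y - f 0| + 1 := by positivity
    nlinarith [abs_nonneg (y - f 0), le_abs_self (y - f 0)]
  have hbdd : ∃ b : ℤ, ∀ x : ℤ, y ≤ f x → b ≤ x := by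
    refine ⟨(-(|y - f 0|) - 1) * (n + 1), ?_⟩
    intro x hx
    by_contra hc
    push_neg at hc
    have hle : f x ≤ f ((-(|y - f 0|) - 1) * (n + 1)) := hmono hc.le
    rw [hk] at hle
    nlinarith [abs_nonneg (y - f 0), neg_abs_le (y - f 0)]
  obtain ⟨b, hb⟩ := hbdd
  obtain ⟨x, hx, hleast⟩ := Int.exists_least_of_bdd (P := fun x => y ≤ f x) ⟨b, hb⟩ hne
  -- f (x-1) ≤ y - 1
  have hx1 : f (x - 1) ≤ y - 1 := by
    by_contra hc
    push_neg at hc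
    have := hleast (x - 1) (by omega)
    omega
  have hxn : f (x + n) ≤ y + m := by
    have h := hper (x - 1)
    have e : x - 1 + (n + 1) = x + n := by ring
    rw [e] at h
    omega
  refine ⟨x, ?_⟩
  ext z
  simp only [Set.mem_preimage, Set.mem_Icc]
  constructor
  · rintro ⟨h1, h2⟩
    constructor
    · by_contra hc
      push_neg at hc
      have : f z ≤ f (x - 1) := hmono (by omega)
      omega
    · by_contra hc
      push_neg at hc
      have hge : f (x + n + 1) ≤ f z := hmono (by omega)
      have h := hper x
      have e : x + (n + 1) = x + n + 1 := by ring
      rw [e] at h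
      omega
  · rintro ⟨h1, h2⟩
    exact ⟨le_trans hx (hmono h1), le_trans (hmono h2) hxn⟩
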